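/- The function f defined by f(x) = x²/2 for |x| ≤ 1 and f(x) = 2(|x| - log(1+|x|)) + 2log2 - 3/2 otherwise is locally strongly convex: on any bounded set X there exists μ > 0 such that |f'(x) - f'(y)| ≥ μ|x - y| for all x, y ∈ X. In particular one may take μ = 1/max_{z∈X}(1+|z|)². -/

import Mathlib

/-- The counterexample function from the paper: `x²/2` for `|x| ≤ 1` and
`2(|x| - log(1+|x|)) + 2 log 2 - 3/2` for `|x| > 1`. -/
noncomputable def badf (x : ℝ) : ℝ :=
  if |x| ≤ 1 then x ^ 2 / 2
  else 2 * (|x| - Real.log (1 + |x|)) + 2 * Real.log 2 - 3 / 2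

/-- The derivative of `badf`. -/
noncomputable def gbad (x : ℝ) : ℝ := if |x| ≤ 1 then x else 2 * x / (1 + |x|)

lemma hasDerivAt_right (x : ℝ) (hx : 0 ≤ x) :
    HasDerivAt (fun y : ℝ => 2 * (y - Real.log (1 + y)) + 2 * Real.log 2 - 3 / 2)
      (2 * x / (1 + x)) x := by
  have hlog : HasDerivAt (fun y : ℝ => Real.log (1 + y)) (1 / (1 + x)) x := by
    simpa using ((hasDerivAt_id x).const_add 1).log (by simp only [id_eq]; intro hc; linarith)
  have h := (((hasDerivAt_id x).sub hlog).const_mul 2).add_const (2 * Real.log 2) |>.sub_const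
    (3 / 2)
  refine h.congr_deriv ?_
  have : (1:ℝ) + x ≠ 0 := by positivity
  field_simp
  ring

lemma hasDerivAt_left (x : ℝ) (hx : x ≤ 0) :
    HasDerivAt (fun y : ℝ => 2 * (-y - Real.log (1 - y)) + 2 * Real.log 2 - 3 / 2)
      (2 * x / (1 - x)) x := by
  have hlog : HasDerivAt (fun y : ℝ => Real.log (1 - y)) (-1 / (1 - x)) x := by
    simpa using ((hasDerivAt_id x).const_sub 1).log (by simp only [id_eq]; intro hc; linarith)
  have h := (((hasDerivAt_id x).neg.sub hlog).const_mul 2).add_const (2 * Real.log 2) |>.sub_const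
    (3 / 2)
  have hne : (1:ℝ) - x ≠ 0 := by intro h; linarith
  refine h.congr_deriv ?_
  field_simp
  ring

lemma badf_one : badf 1 = 1 / 2 := by simp [badf]

lemma badf_neg_one : badf (-1) = 1 / 2 := by norm_num [badf]

lemma deriv_badf (x : ℝ) : deriv badf x = gbad x := by
  rcases lt_trichotomy (|x|) 1 with h | h | h
  · -- interior of the quadratic region
    have habs : x ∈ Set.Ioo (-1 : ℝ) 1 := abs_lt.mp h
    have heq : badf =ᶠ[nhds x] fun y => y ^ 2 / 2 := by
      filter_upwards [Ioo_mem_nhds habs.1 habs.2] with y hy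
      simp [badf, abs_le.mpr ⟨hy.1.le, hy.2.le⟩]
    rw [heq.deriv_eq, gbad, if_pos h.le]
    have := (hasDerivAt_pow 2 x).div_const 2
    simpa using this.deriv
  · -- boundary points x = 1 or x = -1
    rcases abs_eq (by norm_num : (0:ℝ) ≤ 1) |>.mp h with h1 | h1 <;> subst h1
    · have hl : HasDerivWithinAt badf 1 (Set.Iic 1) 1 := by
        have H : HasDerivWithinAt (fun y : ℝ => y ^ 2 / 2) 1 (Set.Iic 1) 1 := by
          have := ((hasDerivAt_pow 2 (1:ℝ)).div_const 2).hasDerivWithinAt (s := Set.Iic 1)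
          simpa using this
        refine H.congr_of_eventuallyEq ?_ (by norm_num [badf])
        filter_upwards [self_mem_nhdsWithin,
          (eventually_gt_nhds (by norm_num : (-1:ℝ) < 1)).filter_mono nhdsWithin_le_nhds]
          with y hy1 hy2
        simp [badf, abs_le.mpr ⟨hy2.le, hy1⟩, hy1, hy2]
      have hr : HasDerivWithinAt badf 1 (Set.Ici 1) 1 := by
        have H := (hasDerivAt_right 1 (by norm_num)).hasDerivWithinAt (s := Set.Ici 1)
        rw [show (2 * 1 / (1 + 1) : ℝ) = 1 by norm_num] at H
        refine H.congr_of_eventuallyEq ?_ (by rw [badf_one]; ring)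
        filter_upwards [self_mem_nhdsWithin] with y (hy : 1 ≤ y)
        rcases eq_or_lt_of_le hy with rfl | hy'
        · rw [badf_one]; ring
        · rw [badf, if_neg (by rw [abs_of_pos (by linarith)]; linarith),
            abs_of_pos (by linarith : (0:ℝ) < y)]
      have := hl.union hr
      rw [Set.Iic_union_Ici, hasDerivWithinAt_univ] at this
      rw [this.deriv, gbad, if_pos h.le]
    · have hl : HasDerivWithinAt badf (-1) (Set.Iic (-1)) (-1) := by
        have H := (hasDerivAt_left (-1) (by norm_num)).hasDerivWithinAt (s := Set.Iic (-1))
        rw [show (2 * (-1) / (1 - (-1)) : ℝ) = -1 by norm_num] at H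
        refine H.congr_of_eventuallyEq ?_ (by rw [badf_neg_one]; ring_nf)
        filter_upwards [self_mem_nhdsWithin] with y (hy : y ≤ -1)
        rcases eq_or_lt_of_le hy with rfl | hy'
        · rw [badf_neg_one]; ring_nf
        · rw [badf, if_neg (by rw [abs_of_neg (by linarith)]; linarith),
            abs_of_neg (by linarith : y < 0)]
          ring_nf
      have hr : HasDerivWithinAt badf (-1) (Set.Ici (-1)) (-1) := by
        have H : HasDerivWithinAt (fun y : ℝ => y ^ 2 / 2) (-1) (Set.Ici (-1)) (-1) := by
          have := ((hasDerivAt_pow 2 (-1:ℝ)).div_const 2).hasDerivWithinAt (s := Set.Ici (-1))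
          simpa using this
        refine H.congr_of_eventuallyEq ?_ (by norm_num [badf])
        filter_upwards [self_mem_nhdsWithin,
          (eventually_lt_nhds (by norm_num : (-1:ℝ) < 1)).filter_mono nhdsWithin_le_nhds]
          with y hy1 hy2
        simp [badf, abs_le.mpr ⟨hy1, hy2.le⟩]
      have := hl.union hr
      rw [Set.Iic_union_Ici, hasDerivWithinAt_univ] at this
      rw [this.deriv, gbad, if_pos h.le]
  · rcases lt_abs.mp h with h1 | h1
    · -- x > 1
      have heq : badf =ᶠ[nhds x]
          fun y => 2 * (y - Real.log (1 + y)) + 2 * Real.log 2 - 3 / 2 := by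
        filter_upwards [eventually_gt_nhds h1] with y hy
        rw [badf, if_neg (by rw [abs_of_pos (by linarith)]; linarith),
          abs_of_pos (by linarith : (0:ℝ) < y)]
      rw [heq.deriv_eq, (hasDerivAt_right x (by linarith)).deriv, gbad,
        if_neg (by linarith), abs_of_pos (by linarith)]
    · -- x < -1
      have h1 : x < -1 := by linarith
      have heq : badf =ᶠ[nhds x]
          fun y => 2 * (-y - Real.log (1 - y)) + 2 * Real.log 2 - 3 / 2 := by
        filter_upwards [eventually_lt_nhds h1] with y hy
        rw [badf, if_neg (by rw [abs_of_neg (by linarith)]; linarith),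
          abs_of_neg (by linarith : y < 0)]
        ring_nf
      rw [heq.deriv_eq, (hasDerivAt_left x (by linarith)).deriv, gbad,
        if_neg (by linarith), abs_of_neg (by linarith)]
      ring_nf

lemma gbad_eq_mid {x : ℝ} (hx : |x| ≤ 1) : gbad x = x := if_pos hx

lemma gbad_eq_right {x : ℝ} (hx : 1 ≤ x) : gbad x = 2 * x / (1 + x) := by
  rcases eq_or_lt_of_le hx with rfl | hx'
  · norm_num [gbad]
  · rw [gbad, if_neg (by rw [abs_of_pos (by linarith)]; linarith),
      abs_of_pos (by linarith : (0:ℝ) < x)]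

lemma gbad_eq_left {x : ℝ} (hx : x ≤ -1) : gbad x = 2 * x / (1 - x) := by
  rcases eq_or_lt_of_le hx with rfl | hx'
  · norm_num [gbad]
  · rw [gbad, if_neg (by rw [abs_of_neg (by linarith)]; linarith),
      abs_of_neg (by linarith : x < 0)]
    ring_nf

lemma gbad_mid (M : ℝ) (hM : 1 ≤ M) {x y : ℝ} (hx : -1 ≤ x) (hxy : x ≤ y) (hy : y ≤ 1) :
    (y - x) / (1 + M) ^ 2 ≤ gbad y - gbad x := by
  rw [gbad_eq_mid (abs_le.mpr ⟨hx, by linarith⟩), gbad_eq_mid (abs_le.mpr ⟨by linarith, hy⟩)]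
  have h1 : (1:ℝ) ≤ (1 + M) ^ 2 := by nlinarith
  calc (y - x) / (1 + M) ^ 2 ≤ (y - x) / 1 := by
        apply div_le_div_of_nonneg_left (by linarith) (by norm_num) h1
    _ = y - x := by ring

lemma gbad_right (M : ℝ) (hM : 1 ≤ M) {x y : ℝ} (hx : 1 ≤ x) (hxy : x ≤ y) (hy : y ≤ M) :
    (y - x) / (1 + M) ^ 2 ≤ gbad y - gbad x := by
  rw [gbad_eq_right hx, gbad_eq_right (hx.trans hxy)]
  have h1 : (0:ℝ) < 1 + x := by linarith
  have h2 : (0:ℝ) < 1 + y := by linarith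
  have key : 2 * y / (1 + y) - 2 * x / (1 + x) = 2 * (y - x) / ((1 + x) * (1 + y)) := by
    field_simp
    ring
  rw [key, div_le_div_iff₀ (by positivity) (by positivity)]
  have hp : (1 + x) * (1 + y) ≤ (1 + M) ^ 2 := by nlinarith
  nlinarith [mul_le_mul_of_nonneg_left hp (by linarith : (0:ℝ) ≤ y - x)]

lemma gbad_left (M : ℝ) (hM : 1 ≤ M) {x y : ℝ} (hx : -M ≤ x) (hxy : x ≤ y) (hy : y ≤ -1) :
    (y - x) / (1 + M) ^ 2 ≤ gbad y - gbad x := by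
  rw [gbad_eq_left hy, gbad_eq_left (hxy.trans hy)]
  have h1 : (0:ℝ) < 1 - x := by linarith
  have h2 : (0:ℝ) < 1 - y := by linarith
  have key : 2 * y / (1 - y) - 2 * x / (1 - x) = 2 * (y - x) / ((1 - x) * (1 - y)) := by
    field_simp
    ring
  rw [key, div_le_div_iff₀ (by positivity) (by positivity)]
  have hp : (1 - x) * (1 - y) ≤ (1 + M) ^ 2 := by nlinarith
  nlinarith [mul_le_mul_of_nonneg_left hp (by linarith : (0:ℝ) ≤ y - x)]

lemma gbad_key (M : ℝ) (hM : 1 ≤ M) {x y : ℝ} (hx : -M ≤ x) (hxy : x ≤ y) (hy : y ≤ M) :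
    (y - x) / (1 + M) ^ 2 ≤ gbad y - gbad x := by
  rcases le_total y (-1) with h | h
  · exact gbad_left M hM hx hxy h
  rcases le_total 1 x with h' | h'
  · exact gbad_right M hM h' hxy hy
  rcases le_total x (-1) with hx1 | hx1
  · rcases le_total y 1 with hy1 | hy1
    · have c1 := gbad_left M hM hx hx1 le_rfl
      have c2 := gbad_mid M hM le_rfl h hy1
      have heq : (y - x) / (1 + M) ^ 2
          = ((-1) - x) / (1 + M) ^ 2 + (y - (-1)) / (1 + M) ^ 2 := by
        rw [← add_div]
        ring_nf
      linarith
    · have c1 := gbad_left M hM hx hx1 le_rfl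
      have c2 := gbad_mid M hM le_rfl (by norm_num) le_rfl
      have c3 := gbad_right M hM le_rfl hy1 hy
      have heq : (y - x) / (1 + M) ^ 2 = ((-1) - x) / (1 + M) ^ 2
          + ((1:ℝ) - (-1)) / (1 + M) ^ 2 + (y - 1) / (1 + M) ^ 2 := by
        rw [← add_div, ← add_div]
        ring_nf
      linarith
  · rcases le_total y 1 with hy1 | hy1
    · exact gbad_mid M hM hx1 hxy hy1
    · have c1 := gbad_mid M hM hx1 h' le_rfl
      have c2 := gbad_right M hM le_rfl hy1 hy
      have heq : (y - x) / (1 + M) ^ 2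
          = ((1:ℝ) - x) / (1 + M) ^ 2 + (y - 1) / (1 + M) ^ 2 := by
        rw [← add_div]
        ring_nf
      linarith

theorem badf_locally_strongly_convex :
    ∀ X : Set ℝ, Bornology.IsBounded X →
      ∃ μ > (0 : ℝ), ∀ x ∈ X, ∀ y ∈ X, μ * |x - y| ≤ |deriv badf x - deriv badf y| := by
  intro X hX
  obtain ⟨C, hC⟩ := isBounded_iff_forall_norm_le.mp hX
  set M : ℝ := max C 1 with hMdef
  have hM : (1:ℝ) ≤ M := le_max_right _ _
  have hmem : ∀ z ∈ X, -M ≤ z ∧ z ≤ M := by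
    intro z hz
    have := hC z hz
    rw [Real.norm_eq_abs] at this
    have h' : |z| ≤ M := this.trans (le_max_left _ _)
    exact abs_le.mp h'
  refine ⟨1 / (1 + M) ^ 2, by positivity, ?_⟩
  intro x hx y hy
  rw [deriv_badf, deriv_badf]
  have main : ∀ a b : ℝ, a ∈ X → b ∈ X → a ≤ b →
      1 / (1 + M) ^ 2 * |a - b| ≤ |gbad a - gbad b| := by
    intro a b ha hb hab
    obtain ⟨ha1, ha2⟩ := hmem a ha
    obtain ⟨hb1, hb2⟩ := hmem b hb
    have key := gbad_key M hM ha1 hab hb2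
    have hnn : (0:ℝ) ≤ (b - a) / (1 + M) ^ 2 := by
      apply div_nonneg (by linarith) (by positivity)
    rw [abs_of_nonpos (by linarith : a - b ≤ 0),
      abs_of_nonpos (by linarith : gbad a - gbad b ≤ 0)]
    calc 1 / (1 + M) ^ 2 * -(a - b) = (b - a) / (1 + M) ^ 2 := by ring
      _ ≤ gbad b - gbad a := key
      _ = -(gbad a - gbad b) := by ring
  rcases le_total x y with h | h
  · exact main x y hx hy h
  · rw [abs_sub_comm, abs_sub_comm (gbad x)]
    exact main y x hy hx h
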